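/- Let d = p^e be a prime power, m ≥ 2, and ζ ≠ 1 a d-th root of unity. Then the Misiurewicz polynomial G^ζ_{d,m,1}(c) = a_m(c) − ζ·a_{m−1}(c) divided by a_1(c) = c, i.e., G^ζ_{d,m,1} = (a_m − ζ a_{m−1})/a_1, is irreducible over ℚ(ζ). -/

import Mathlib

open Polynomial NumberField

noncomputable def misB (R : Type*) [CommRing R] (d : ℕ) : ℕ → Polynomial R
  | 0 => 0
  | (i+1) => misB R d i ^ d + Polynomial.X

lemma misB_map {R S : Type*} [CommRing R] [CommRing S] (f : R →+* S) (d : ℕ) :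
    ∀ i, (misB R d i).map f = misB S d i
  | 0 => by simp [misB]
  | (i+1) => by simp [misB, Polynomial.map_pow, misB_map f d i]

lemma X_dvd_misB (R : Type*) [CommRing R] (d : ℕ) (hd : 1 ≤ d) :
    ∀ i, X ∣ misB R d i
  | 0 => by simp [misB]
  | (i+1) => by
      simpa [misB] using dvd_add (dvd_pow (X_dvd_misB R d hd i) (by omega)) dvd_rfl

lemma misB_monic (R : Type*) [CommRing R] [Nontrivial R] (d : ℕ) (hd : 2 ≤ d) :
    ∀ i, (misB R d (i+1)).Monic ∧ (misB R d (i+1)).natDegree = d ^ i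
  | 0 => by
      have : misB R d 1 = X := by
        simp [misB, zero_pow (by omega : d ≠ 0)]
      rw [this]; exact ⟨monic_X, natDegree_X⟩
  | (i+1) => by
      obtain ⟨hmon, hdeg⟩ := misB_monic R d hd i
      have hpow : (misB R d (i+1) ^ d).Monic := hmon.pow d
      have hpdeg : (misB R d (i+1) ^ d).natDegree = d ^ (i+1) := by
        rw [hmon.natDegree_pow, hdeg, pow_succ, mul_comm]
      have h2 : (1:ℕ) < d ^ (i+1) := by
        calc (1:ℕ) < d := by omega
        _ ≤ d ^ (i+1) := Nat.le_self_pow (by omega) d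
      have hlt : (X : Polynomial R).degree < (misB R d (i+1) ^ d).degree := by
        rw [degree_X, degree_eq_natDegree hpow.ne_zero, hpdeg]
        exact_mod_cast h2
      constructor
      · exact hpow.add_of_left hlt
      · show (misB R d (i+1) ^ d + X).natDegree = d ^ (i+1)
        rw [natDegree_eq_of_degree_eq (degree_add_eq_left_of_degree_lt hlt), hpdeg]

lemma misB_coeff (R : Type*) [CommRing R] (d : ℕ) (hd : 2 ≤ d) :
    ∀ i, (misB R d (i+1)).coeff 0 = 0 ∧ (misB R d (i+1)).coeff 1 = 1
  | 0 => by simp [misB, zero_pow (by omega : d ≠ 0)]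
  | (i+1) => by
      have hX2 : (X:Polynomial R)^2 ∣ misB R d (i+1) ^ d := by
        calc (X:Polynomial R)^2 ∣ misB R d (i+1) ^ 2 :=
              pow_dvd_pow_of_dvd (X_dvd_misB R d (by omega) _) 2
        _ ∣ misB R d (i+1) ^ d := pow_dvd_pow _ hd
      have h0 := (X_pow_dvd_iff.mp hX2) 0 (by omega)
      have h1 := (X_pow_dvd_iff.mp hX2) 1 (by omega)
      refine ⟨?_, ?_⟩
      · show ((misB R d (i+1)) ^ d + X).coeff 0 = (0:R)
        rw [coeff_add, h0, coeff_X_zero, add_zero]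
      · show ((misB R d (i+1)) ^ d + X).coeff 1 = (1:R)
        rw [coeff_add, h1, coeff_X_one, zero_add]

lemma misB_sub (R : Type*) [CommRing R] (p : ℕ) [Fact p.Prime] [CharP R p] (e : ℕ)
    (he : 1 ≤ e) :
    ∀ j, misB R (p^e) (j+2) - misB R (p^e) (j+1) = X ^ ((p^e) ^ (j+1))
  | 0 => by
      have hd0 : p ^ e ≠ 0 := pow_ne_zero e (Nat.Prime.ne_zero Fact.out)
      have h1 : misB R (p^e) 1 = X := by
        simp [misB, zero_pow hd0]
      show (misB R (p^e) 1 ^ (p^e) + X) - (misB R (p^e) 0 ^ (p^e) + X) = X ^ ((p^e)^1)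
      simp [misB, h1, zero_pow hd0]
  | (j+1) => by
      have ih := misB_sub R p e he j
      show (misB R (p^e) (j+2) ^ (p^e) + X) - (misB R (p^e) (j+1) ^ (p^e) + X)
          = X ^ ((p^e)^(j+2))
      have : misB R (p^e) (j+2) ^ (p^e) - misB R (p^e) (j+1) ^ (p^e)
          = (misB R (p^e) (j+2) - misB R (p^e) (j+1)) ^ (p^e) := by
        rw [sub_pow_char_pow]
      rw [add_sub_add_right_eq_sub, this, ih, ← pow_mul, ← pow_succ]

set_option maxHeartbeats 1000000 in
set_option synthInstance.maxHeartbeats 400000 in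
/-- d = p^e a prime power, m ≥ 2, ζ ≠ 1 a d-th root of unity,
K = ℚ(ζ). The Misiurewicz polynomial G^ζ_{d,m,1} = (a_m − ζ a_{m−1})/a_1,
where a_1 = X (the variable c), is irreducible over ℚ(ζ). -/
theorem stmt13 (p e : ℕ) (hp : p.Prime) (he : 1 ≤ e) (d : ℕ) (hd : d = p ^ e)
    (m : ℕ) (hm : 2 ≤ m)
    (K : Type*) [Field K] [CharZero K]
    (ζ : K) (hζd : ζ ^ d = 1) (hζ1 : ζ ≠ 1)
    (hK : Algebra.adjoin ℚ {ζ} = ⊤)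
    (a : ℕ → Polynomial K) (ha0 : a 0 = 0)
    (haS : ∀ i, a (i + 1) = a i ^ d + Polynomial.X) :
    Irreducible ((a m - Polynomial.C ζ * a (m - 1)) /ₘ Polynomial.X) := by
  haveI : Fact p.Prime := ⟨hp⟩
  subst hd
  set d := p ^ e with hd
  have hd2 : 2 ≤ d := le_trans hp.two_le (Nat.le_self_pow (by omega) p)
  obtain ⟨m', rfl⟩ : ∃ m', m = m' + 2 := ⟨m - 2, by omega⟩
  -- the order of ζ is p ^ (k+1)
  have hord_dvd : orderOf ζ ∣ d := orderOf_dvd_of_pow_eq_one hζd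
  obtain ⟨f, hfe, hford⟩ := (Nat.dvd_prime_pow hp).1 hord_dvd
  have hf1 : 1 ≤ f := by
    rcases Nat.eq_zero_or_pos f with h0 | h
    · exfalso
      rw [h0, pow_zero] at hford
      exact hζ1 (orderOf_eq_one_iff.mp hford)
    · exact h
  obtain ⟨k, rfl⟩ : ∃ k, f = k + 1 := ⟨f - 1, by omega⟩
  set q : ℕ+ := ⟨p, hp.pos⟩ with hq
  haveI : Fact (Nat.Prime (q : ℕ)) := ⟨hp⟩
  have hqp : (q : ℕ) ^ (k+1) = p ^ (k+1) := rfl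
  have hζprim : IsPrimitiveRoot ζ ((q : ℕ) ^ (k+1)) := by
    rw [hqp, ← hford]; exact IsPrimitiveRoot.orderOf ζ
  haveI hcyc : IsCyclotomicExtension {(q : ℕ) ^ (k+1)} ℚ K := by
    rw [IsCyclotomicExtension.iff_adjoin_eq_top]
    refine ⟨fun n hn _ => ⟨ζ, by rwa [Set.mem_singleton_iff.1 hn]⟩, ?_⟩
    rw [eq_top_iff, ← hK]
    apply Algebra.adjoin_mono
    rw [Set.singleton_subset_iff]
    exact ⟨(q : ℕ) ^ (k+1), rfl, pow_ne_zero _ q.ne_zero, by rw [hqp, ← hford]; exact pow_orderOf_eq_one ζ⟩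
  haveI : NumberField K := IsCyclotomicExtension.numberField {(q : ℕ) ^ (k+1)} ℚ K
  set θ := hζprim.toInteger with hθ
  have hπ : Prime (θ - 1) := hζprim.zeta_sub_one_prime
  have hπp : (θ - 1) ∣ ((p : ℕ) : 𝓞 K) := by
    have h := hζprim.toInteger_sub_one_dvd_prime
    exact_mod_cast h
  set 𝓟 : Ideal (𝓞 K) := Ideal.span {θ - 1} with h𝓟
  have h𝓟prime : 𝓟.IsPrime := (Ideal.span_singleton_prime hπ.ne_zero).2 hπ
  have h𝓟bot : 𝓟 ≠ ⊥ := by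
    simpa [h𝓟, Ideal.span_singleton_eq_bot] using hπ.ne_zero
  haveI : 𝓟.IsPrime := h𝓟prime
  haveI : CharP (𝓞 K ⧸ 𝓟) p := by
    refine (CharP.charP_iff_prime_eq_zero hp).2 ?_
    rw [← map_natCast (Ideal.Quotient.mk 𝓟)]
    exact Ideal.Quotient.eq_zero_iff_mem.2 (Ideal.mem_span_singleton.2 hπp)
  -- the integral model G and its quotient g
  set G : Polynomial (𝓞 K) := misB (𝓞 K) d (m'+2) - C θ * misB (𝓞 K) d (m'+1) with hG
  obtain ⟨hmon2, hdeg2⟩ := misB_monic (𝓞 K) d hd2 (m'+1)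
  obtain ⟨hmon1, hdeg1⟩ := misB_monic (𝓞 K) d hd2 m'
  have hdlt : (C θ * misB (𝓞 K) d (m'+1)).degree < (misB (𝓞 K) d (m'+2)).degree := by
    have h1 : (C θ * misB (𝓞 K) d (m'+1)).degree ≤ (misB (𝓞 K) d (m'+1)).degree := by
      refine le_trans (degree_mul_le _ _) ?_
      calc (C θ).degree + (misB (𝓞 K) d (m'+1)).degree
          ≤ 0 + (misB (𝓞 K) d (m'+1)).degree := add_le_add degree_C_le le_rfl
        _ = (misB (𝓞 K) d (m'+1)).degree := zero_add _
    refine lt_of_le_of_lt h1 ?_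
    rw [degree_eq_natDegree hmon1.ne_zero, degree_eq_natDegree hmon2.ne_zero, hdeg1, hdeg2]
    exact_mod_cast pow_lt_pow_right₀ (by omega : 1 < d) (by omega)
  have hGmon : G.Monic := hmon2.sub_of_left hdlt
  have hGdeg : G.natDegree = d ^ (m'+1) := by
    rw [hG, natDegree_eq_of_degree_eq (degree_sub_eq_left_of_degree_lt hdlt), hdeg2]
  have hXG : X ∣ G := by
    refine dvd_sub (X_dvd_misB (𝓞 K) d (by omega) _) ?_
    exact Dvd.dvd.mul_left (X_dvd_misB (𝓞 K) d (by omega) _) _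
  set g : Polynomial (𝓞 K) := G /ₘ X with hg
  have hXg : G = X * g := by
    conv_lhs => rw [← modByMonic_add_div G X]
    rw [(modByMonic_eq_zero_iff_dvd monic_X).2 hXG, zero_add]
  have hgmon : g.Monic := by
    have := hGmon
    rw [Monic, hXg, leadingCoeff_mul, leadingCoeff_X, one_mul] at this
    exact this
  have hgdeg : g.natDegree = d ^ (m'+1) - 1 := by
    have h := hGdeg
    rw [hXg, natDegree_mul X_ne_zero hgmon.ne_zero, natDegree_X] at h
    omega
  -- small coefficients
  have hGc1 : G.coeff 1 = 1 - θ := by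
    obtain ⟨-, hB2c1⟩ := misB_coeff (𝓞 K) d hd2 (m'+1)
    obtain ⟨-, hB1c1⟩ := misB_coeff (𝓞 K) d hd2 m'
    rw [hG, coeff_sub, hB2c1, coeff_C_mul, hB1c1, mul_one]
  have hgc0 : g.coeff 0 = 1 - θ := by
    rw [← hGc1, hXg, coeff_X_mul]
  -- the reduction mod 𝓟
  set ψ := Ideal.Quotient.mk 𝓟 with hψ
  have hψθ : ψ θ = 1 := by
    have : ψ (θ - 1) = 0 := Ideal.Quotient.eq_zero_iff_mem.2
      (Ideal.mem_span_singleton.2 dvd_rfl)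
    rw [map_sub, map_one, sub_eq_zero] at this
    exact this
  have hmapG : G.map ψ = X ^ (d ^ (m'+1)) := by
    rw [hG, Polynomial.map_sub, Polynomial.map_mul, map_C, hψθ, C_1, one_mul,
      misB_map, misB_map]
    exact misB_sub (𝓞 K ⧸ 𝓟) p e he m'
  have hmapg : g.map ψ = X ^ (d ^ (m'+1) - 1) := by
    have h1 : X * g.map ψ = X * X ^ (d ^ (m'+1) - 1) := by
      rw [← Polynomial.map_X (f := ψ), ← Polynomial.map_mul, ← hXg, Polynomial.map_X,
        hmapG, ← pow_succ']
      congr 1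
      have : 2 ≤ d ^ (m'+1) := le_trans hd2 (Nat.le_self_pow (by omega) d)
      omega
    exact mul_left_cancel₀ X_ne_zero h1
  -- Eisenstein at 𝓟
  have hEis : g.IsEisensteinAt 𝓟 := by
    refine ⟨?_, ?_, ?_⟩
    · rw [hgmon.leadingCoeff]
      intro h1
      exact h𝓟prime.ne_top (Ideal.eq_top_of_isUnit_mem _ h1 isUnit_one)
    · intro n hn
      refine Ideal.Quotient.eq_zero_iff_mem.1 ?_
      have : (g.map ψ).coeff n = ψ (g.coeff n) := coeff_map ψ n
      rw [hmapg, coeff_X_pow, if_neg (by rw [hgdeg] at hn; omega)] at this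
      exact this.symm
    · rw [hgc0, h𝓟, Ideal.span_singleton_pow, Ideal.mem_span_singleton]
      intro hdvd
      rw [show (1 : 𝓞 K) - θ = -(θ - 1) by ring, dvd_neg] at hdvd
      obtain ⟨c, hc⟩ := hdvd
      have h2 : (θ - 1) * 1 = (θ - 1) * ((θ - 1) * c) := by
        rw [mul_one]
        conv_lhs => rw [hc]
        ring
      have h3 := mul_left_cancel₀ hπ.ne_zero h2
      exact hπ.not_unit (IsUnit.of_mul_eq_one _ h3.symm)
  have hgirr : Irreducible g := by
    refine hEis.irreducible h𝓟prime hgmon.isPrimitive ?_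
    rw [hgdeg]
    have : 2 ≤ d ^ (m'+1) := le_trans hd2 (Nat.le_self_pow (by omega) d)
    omega
  have hirr : Irreducible (g.map (algebraMap (𝓞 K) K)) :=
    (hgmon.irreducible_iff_irreducible_map_fraction_map).1 hgirr
  -- identify the target with the map of g
  have haK : ∀ i, a i = misB K d i := by
    intro i
    induction i with
    | zero => simpa [misB] using ha0
    | succ i ih => rw [haS, ih]; rfl
  have hζθ : algebraMap (𝓞 K) K θ = ζ := rfl
  have htarget : a (m'+2) - C ζ * a (m'+2-1) = X * g.map (algebraMap (𝓞 K) K) := by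
    have hGK : G.map (algebraMap (𝓞 K) K) = misB K d (m'+2) - C ζ * misB K d (m'+1) := by
      rw [hG, Polynomial.map_sub, Polynomial.map_mul, map_C, hζθ, misB_map, misB_map]
    rw [show m'+2-1 = m'+1 from rfl, haK, haK, ← hGK, hXg, Polynomial.map_mul,
      Polynomial.map_X]
  rw [htarget, mul_divByMonic_cancel_left _ monic_X]
  exact hirr
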